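/- arXiv:2605.30113 — 2 statements merged into one kernel-verified Lean document; each statement's English description precedes it below -/
import Mathlib

section
/- Peeling lemma for good multi-hypergraphs (Lemma 6.4): Fix integers r ≥ 2 and m ≥ 2. Let α be a nonzero good r-uniform multi-hypergraph, fix an edge e of α (with multiplicity), and let α⋆(e) be the maximal good subgraph of α − 1_e, i.e. the union (edgewise maximum) of all good subgraphs of α − 1_e. If α⋆(e) ≠ 0, then r|α⋆(e)| − 2|V(α⋆(e))| + m ≤ r|α| − 2|V(α)| + m − 1. -/
open MeasureTheory

/-- An r-uniform multi-hypergraph on [n]: a multiplicity for each size-r multiset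
of vertices. -/
abbrev MHG (n r : ℕ) := Sym (Fin n) r → ℕ

/-- The multiset of edges (each a multiset of vertices) of a multi-hypergraph,
with multiplicity. -/
def edgesOf {n r : ℕ} (α : MHG n r) : Multiset (Multiset (Fin n)) :=
  ∑ e : Sym (Fin n) r, Multiset.replicate (α e) (e : Multiset (Fin n))

/-- The extra hyperedge {1,…,m} (vertices of index < m). -/
def barEdge (n m : ℕ) : Multiset (Fin n) :=
  (Finset.univ.filter fun i : Fin n => (i : ℕ) < m).val

/-- ᾱ: the multi-hypergraph α together with the added hyperedge {1,…,m}. -/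
def barGraph {n r : ℕ} (m : ℕ) (α : MHG n r) : Multiset (Multiset (Fin n)) :=
  barEdge n m ::ₘ edgesOf α

/-- Degree of vertex i in a multiset of edges, counted with multiplicity
(an edge contributes the number of occurrences of i in it). -/
def degM {n : ℕ} (G : Multiset (Multiset (Fin n))) (i : Fin n) : ℕ :=
  (G.map fun e => e.count i).sum

/-- A (general, not necessarily uniform) multi-hypergraph given as a multiset of
edges is connected: every pair of non-isolated vertices is joined by a chain of
pairwise-intersecting edges of G. -/
def MHConnected {n : ℕ} (G : Multiset (Multiset (Fin n))) : Prop :=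
  ∀ u v : Fin n, (∃ e ∈ G, u ∈ e) → (∃ e ∈ G, v ∈ e) →
    ∃ (p : ℕ) (c : Fin (p + 1) → Multiset (Fin n)),
      (∀ j, c j ∈ G) ∧ u ∈ c 0 ∧ v ∈ c (Fin.last p) ∧
      ∀ j : Fin p, ∃ w : Fin n, w ∈ c j.castSucc ∧ w ∈ c j.succ

/-- α is good: α = 0, or ᾱ is connected and every non-isolated vertex of ᾱ has
degree at least 2 (with multiplicity). -/
def GoodMHG {n r : ℕ} (m : ℕ) (α : MHG n r) : Prop :=
  α = 0 ∨ (MHConnected (barGraph m α) ∧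
    ∀ i : Fin n, 0 < degM (barGraph m α) i → 2 ≤ degM (barGraph m α) i)

/-- Number of edges of α, counted with multiplicity. -/
def edgeCount {n r : ℕ} (α : MHG n r) : ℕ := ∑ e, α e

/-- Number of non-isolated vertices of α. -/
def vertexCount {n r : ℕ} (α : MHG n r) : ℕ :=
  (Finset.univ.filter fun i : Fin n => 0 < degM (edgesOf α) i).card

/-- binom(α,β) = ∏_e binom(α_e, β_e). -/
def mhgChoose {n r : ℕ} (α β : MHG n r) : ℕ := ∏ e, Nat.choose (α e) (β e)

/-- X^α = ∏_e X_e^{α_e} as a function of θ, where X_e = λ·∏_{i∈e} θ_i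
(with multiplicity). -/
noncomputable def XPow {n r : ℕ} (lam : ℝ) (θ : Fin n → ℝ) (α : MHG n r) : ℝ :=
  ∏ e : Sym (Fin n) r, (lam * ((e : Multiset (Fin n)).map θ).prod) ^ α e

/-- The estimand x = ∏_{i=1}^m θ_i. -/
def xEst {n : ℕ} (m : ℕ) (hmn : m ≤ n) (θ : Fin n → ℝ) : ℝ :=
  ∏ i : Fin m, θ (Fin.castLE hmn i)

open scoped Classical

/-- The maximal good subgraph of α: the edgewise maximum (union) of all good
subgraphs β ≤ α. -/
noncomputable def maxGoodSub {n r : ℕ} (m : ℕ) (α : MHG n r) : MHG n r :=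
  fun f => ((Finset.Iic α).filter fun β => GoodMHG m β).sup fun β => β f

lemma mem_edgesOf {n r : ℕ} {α : MHG n r} {f : Multiset (Fin n)} :
    f ∈ edgesOf α ↔ ∃ g : Sym (Fin n) r, 0 < α g ∧ (g : Multiset (Fin n)) = f := by
  simp [edgesOf, Multiset.mem_sum, Multiset.mem_replicate, Nat.pos_iff_ne_zero, eq_comm]

lemma degM_edgesOf {n r : ℕ} (α : MHG n r) (i : Fin n) :
    degM (edgesOf α) i = ∑ f : Sym (Fin n) r, α f * Multiset.count i (f : Multiset (Fin n)) := by
  unfold degM edgesOf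
  rw [show Multiset.map (fun e => Multiset.count i e) (∑ e : Sym (Fin n) r, Multiset.replicate (α e) (e : Multiset (Fin n))) = ∑ e : Sym (Fin n) r, Multiset.map (fun e => Multiset.count i e) (Multiset.replicate (α e) (e : Multiset (Fin n))) from map_sum (Multiset.mapAddMonoidHom fun e => Multiset.count i e) _ _]
  rw [show (∑ e : Sym (Fin n) r, Multiset.map (fun e => Multiset.count i e) (Multiset.replicate (α e) (e : Multiset (Fin n)))).sum = ∑ e : Sym (Fin n) r, (Multiset.map (fun e => Multiset.count i e) (Multiset.replicate (α e) (e : Multiset (Fin n)))).sum from map_sum Multiset.sumAddMonoidHom _ _]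
  simp [Multiset.map_replicate, Multiset.sum_replicate, mul_comm]

lemma count_barEdge {n m : ℕ} (i : Fin n) :
    (barEdge n m).count i = if (i : ℕ) < m then 1 else 0 := by
  rw [barEdge, Multiset.count_eq_of_nodup (Finset.nodup _)]
  simp [Finset.mem_filter]

lemma degM_bar {n r : ℕ} (m : ℕ) (α : MHG n r) (i : Fin n) :
    degM (barGraph m α) i = (barEdge n m).count i + degM (edgesOf α) i := by
  simp [degM, barGraph]

lemma sum_count_univ {n : ℕ} (s : Multiset (Fin n)) :
    ∑ i : Fin n, s.count i = Multiset.card s := by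
  rw [← Multiset.toFinset_sum_count_eq s]
  exact (Finset.sum_subset (Finset.subset_univ _) (by
    intro x _ hx
    simp [Multiset.count_eq_zero, Multiset.mem_toFinset] at *
    exact hx)).symm

lemma sum_degM {n r : ℕ} (α : MHG n r) :
    ∑ i : Fin n, degM (edgesOf α) i = r * (∑ e, α e) := by
  simp only [degM_edgesOf]
  rw [Finset.sum_comm]
  rw [Finset.mul_sum]
  congr 1; funext f
  rw [← Finset.mul_sum, sum_count_univ]
  rw [show Multiset.card (f : Multiset (Fin n)) = r from f.2]
  ring

def MLink {n : ℕ} (G : Multiset (Multiset (Fin n))) (u v : Fin n) : Prop :=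
  ∃ e ∈ G, u ∈ e ∧ v ∈ e

lemma mlink_symm {n : ℕ} {G : Multiset (Multiset (Fin n))} : Symmetric (MLink G) := by
  rintro u v ⟨e, he, hu, hv⟩; exact ⟨e, he, hv, hu⟩

lemma rtg_of_chain {n : ℕ} {G : Multiset (Multiset (Fin n))} {u v : Fin n}
    (p : ℕ) (c : Fin (p + 1) → Multiset (Fin n))
    (hmem : ∀ j, c j ∈ G) (hu : u ∈ c 0) (hv : v ∈ c (Fin.last p))
    (hadj : ∀ j : Fin p, ∃ w : Fin n, w ∈ c j.castSucc ∧ w ∈ c j.succ) :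
    Relation.ReflTransGen (MLink G) u v := by
  induction p generalizing u with
  | zero =>
      exact Relation.ReflTransGen.single ⟨c 0, hmem 0, hu, hv⟩
  | succ p ih =>
      obtain ⟨w, hw1, hw2⟩ := hadj 0
      have h1 : Relation.ReflTransGen (MLink G) u w :=
        Relation.ReflTransGen.single ⟨c 0, hmem 0, hu, by simpa using hw1⟩
      refine h1.trans (ih (fun j => c j.succ) (fun j => hmem j.succ) hw2 ?_ ?_)
      · show v ∈ c (Fin.last p).succ
        rw [Fin.succ_last]; exact hv
      · intro j
        obtain ⟨w', h1', h2'⟩ := hadj j.succ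
        refine ⟨w', ?_, ?_⟩
        · show w' ∈ c (j.castSucc).succ
          rw [Fin.succ_castSucc]; exact h1'
        · exact h2'

lemma chain_of_rtg {n : ℕ} {G : Multiset (Multiset (Fin n))} {u v : Fin n}
    (h : Relation.ReflTransGen (MLink G) u v) (hu : ∃ e ∈ G, u ∈ e) :
    ∃ (p : ℕ) (c : Fin (p + 1) → Multiset (Fin n)),
      (∀ j, c j ∈ G) ∧ u ∈ c 0 ∧ v ∈ c (Fin.last p) ∧
      ∀ j : Fin p, ∃ w : Fin n, w ∈ c j.castSucc ∧ w ∈ c j.succ := by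
  induction h with
  | refl =>
      obtain ⟨e, he, hue⟩ := hu
      exact ⟨0, fun _ => e, fun _ => he, hue, hue, fun j => j.elim0⟩
  | tail _ hbv ih =>
      rename_i b v' _
      obtain ⟨e, he, hbe, hve⟩ := hbv
      obtain ⟨p, c, hmem, hu0, hblast, hadj⟩ := ih
      refine ⟨p + 1, Fin.snoc c e, ?_, ?_, ?_, ?_⟩
      · intro j
        induction j using Fin.lastCases with
        | last => rw [Fin.snoc_last]; exact he
        | cast k => rw [Fin.snoc_castSucc]; exact hmem k
      · rw [show (0 : Fin (p+2)) = Fin.castSucc 0 by simp, Fin.snoc_castSucc]; exact hu0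
      · rw [Fin.snoc_last]; exact hve
      · intro j
        induction j using Fin.lastCases with
        | last =>
          refine ⟨b, ?_, ?_⟩
          · rw [Fin.snoc_castSucc]; exact hblast
          · rw [Fin.succ_last, Fin.snoc_last]; exact hbe
        | cast k =>
          obtain ⟨w, hw1, hw2⟩ := hadj k
          refine ⟨w, ?_, ?_⟩
          · rw [show (k.castSucc).castSucc = (k.castSucc).castSucc from rfl, Fin.snoc_castSucc]; exact hw1
          · rw [Fin.succ_castSucc, Fin.snoc_castSucc]; exact hw2

-- new material
lemma maxGoodSub_le {n r m : ℕ} (γ : MHG n r) (f : Sym (Fin n) r) :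
    maxGoodSub m γ f ≤ γ f := by
  apply Finset.sup_le
  intro β hβ
  rw [Finset.mem_filter, Finset.mem_Iic] at hβ
  exact Pi.le_def.mp hβ.1 f

lemma le_maxGoodSub {n r m : ℕ} {γ β : MHG n r} (hg : GoodMHG m β) (hle : β ≤ γ)
    (f : Sym (Fin n) r) : β f ≤ maxGoodSub m γ f := by
  unfold maxGoodSub
  exact Finset.le_sup (f := fun g : MHG n r => g f)
    (Finset.mem_filter.mpr ⟨Finset.mem_Iic.mpr hle, hg⟩)

lemma exists_good_of_pos {n r m : ℕ} {γ : MHG n r} {f : Sym (Fin n) r}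
    (h : 0 < maxGoodSub m γ f) : ∃ β : MHG n r, β ≤ γ ∧ GoodMHG m β ∧ 0 < β f := by
  by_contra hc
  push_neg at hc
  rw [maxGoodSub] at h
  rw [show (((Finset.Iic γ).filter fun β => GoodMHG m β).sup fun β => β f) = 0 from ?_] at h
  · exact absurd h (lt_irrefl 0)
  · rw [show (0:ℕ) = ⊥ from rfl, Finset.sup_eq_bot_iff]
    intro β hβ
    rw [Finset.mem_filter, Finset.mem_Iic] at hβ
    exact Nat.le_zero.mp (hc β hβ.1 hβ.2)

lemma degM_mono {n r : ℕ} {β γ : MHG n r} (h : ∀ f, β f ≤ γ f) (i : Fin n) :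
    degM (edgesOf β) i ≤ degM (edgesOf γ) i := by
  rw [degM_edgesOf, degM_edgesOf]
  exact Finset.sum_le_sum fun f _ => Nat.mul_le_mul_right _ (h f)

lemma degM_edgesOf_pos {n r : ℕ} {β : MHG n r} {i : Fin n} {f : Sym (Fin n) r}
    (hf : 0 < β f) (hi : i ∈ (f : Multiset (Fin n))) : 0 < degM (edgesOf β) i := by
  rw [degM_edgesOf]
  refine Finset.sum_pos' (fun g _ => Nat.zero_le _) ⟨f, Finset.mem_univ f, ?_⟩
  exact Nat.mul_pos hf (Multiset.count_pos.mpr hi)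

lemma degM_edgesOf_pos_iff {n r : ℕ} {β : MHG n r} {i : Fin n} :
    0 < degM (edgesOf β) i ↔ ∃ f : Sym (Fin n) r, 0 < β f ∧ i ∈ (f : Multiset (Fin n)) := by
  constructor
  · intro h
    by_contra hc
    push_neg at hc
    rw [degM_edgesOf, Finset.sum_eq_zero] at h
    · exact absurd h (lt_irrefl 0)
    · intro f _
      rcases Nat.eq_zero_or_pos (β f) with h0 | h0
      · rw [h0, zero_mul]
      · rw [Multiset.count_eq_zero.mpr (hc f h0), mul_zero]
  · rintro ⟨f, h1, h2⟩; exact degM_edgesOf_pos h1 h2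

lemma good_bar_vertex {n r m : ℕ} {β : MHG n r} (hg : GoodMHG m β) (hne : β ≠ 0)
    {i : Fin n} (him : (i : ℕ) < m) : 0 < degM (edgesOf β) i := by
  rcases hg with h0 | ⟨_, hdeg⟩
  · exact absurd h0 hne
  · have hc : (barEdge n m).count i = 1 := by rw [count_barEdge, if_pos him]
    have h1 : 0 < degM (barGraph m β) i := by rw [degM_bar, hc]; omega
    have h2 := hdeg i h1
    rw [degM_bar, hc] at h2
    omega

lemma mem_barGraph {n r m : ℕ} {β : MHG n r} {E : Multiset (Fin n)} :
    E ∈ barGraph m β ↔ E = barEdge n m ∨ ∃ g : Sym (Fin n) r, 0 < β g ∧ (g : Multiset (Fin n)) = E := by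
  rw [barGraph, Multiset.mem_cons, mem_edgesOf]

lemma ne_zero_iff_exists_pos {n r : ℕ} {β : MHG n r} : β ≠ 0 ↔ ∃ f, 0 < β f := by
  rw [Function.ne_iff]
  exact exists_congr fun f => by simp [Nat.pos_iff_ne_zero]

lemma maxGoodSub_good {n r : ℕ} {m : ℕ} (hm : 0 < m) (hmn : m ≤ n) (γ : MHG n r) :
    GoodMHG m (maxGoodSub m γ) := by
  set σ := maxGoodSub m γ with hσdef
  by_cases hσ : σ = 0
  · exact Or.inl hσ
  have hn : 0 < n := lt_of_lt_of_le hm hmn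
  set z : Fin n := ⟨0, hn⟩ with hzdef
  have hz : z ∈ barEdge n m := by
    rw [barEdge, ← Finset.mem_def]
    simp only [Finset.mem_filter, Finset.mem_univ, true_and]
    exact hm
  -- membership mono
  have hsub : ∀ {β : MHG n r}, GoodMHG m β → β ≤ γ → ∀ E ∈ barGraph m β, E ∈ barGraph m σ := by
    intro β hg hle E hE
    rw [mem_barGraph] at hE ⊢
    rcases hE with h | ⟨g, hg1, hg2⟩
    · exact Or.inl h
    · exact Or.inr ⟨g, lt_of_lt_of_le hg1 (le_maxGoodSub hg hle g), hg2⟩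
  have key : ∀ u : Fin n, (∃ e ∈ barGraph m σ, u ∈ e) →
      Relation.ReflTransGen (MLink (barGraph m σ)) u z := by
    rintro u ⟨E, hE, huE⟩
    rw [mem_barGraph] at hE
    rcases hE with h | ⟨g, hg1, hg2⟩
    · refine Relation.ReflTransGen.single ⟨E, ?_, huE, h ▸ hz⟩
      rw [mem_barGraph]; exact Or.inl h
    · obtain ⟨β, hβle, hβg, hβpos⟩ := exists_good_of_pos hg1
      have hβne : β ≠ 0 := ne_zero_iff_exists_pos.mpr ⟨g, hβpos⟩
      have hβg' := hβg
      rcases hβg with h0 | ⟨hconn, _⟩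
      · exact absurd h0 hβne
      have hgmem : (g : Multiset (Fin n)) ∈ barGraph m β :=
        mem_barGraph.mpr (Or.inr ⟨g, hβpos, rfl⟩)
      have hbe : barEdge n m ∈ barGraph m β := mem_barGraph.mpr (Or.inl rfl)
      obtain ⟨p, c, hmem, hu0, hvlast, hadj⟩ :=
        hconn u z ⟨g, hgmem, hg2 ▸ huE⟩ ⟨barEdge n m, hbe, hz⟩
      have hrtg : Relation.ReflTransGen (MLink (barGraph m β)) u z :=
        rtg_of_chain p c hmem hu0 hvlast hadj
      refine Relation.ReflTransGen.mono (r := MLink (barGraph m β)) ?_ u z hrtg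
      rintro a b ⟨E', hE', ha, hb⟩
      exact ⟨E', hsub hβg' hβle E' hE', ha, hb⟩
  have hsymm : Symmetric (Relation.ReflTransGen (MLink (barGraph m σ))) :=
    by haveI : Std.Symm (MLink (barGraph m σ)) := ⟨fun a b h => mlink_symm h⟩; exact fun a b h => Std.Symm.symm a b h
  refine Or.inr ⟨?_, ?_⟩
  · intro u v hu hv
    exact chain_of_rtg ((key u hu).trans (hsymm (key v hv))) hu
  · intro i hdeg
    rcases Nat.eq_zero_or_pos (degM (edgesOf σ) i) with h0 | hpos
    · -- then i < m, and any good nonzero β ≤ γ with a positive edge gives a contradiction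
      obtain ⟨f0, hf0⟩ := ne_zero_iff_exists_pos.mp hσ
      obtain ⟨β, hβle, hβg, hβpos⟩ := exists_good_of_pos hf0
      have hβne : β ≠ 0 := ne_zero_iff_exists_pos.mpr ⟨f0, hβpos⟩
      have him : (i : ℕ) < m := by
        rw [degM_bar, h0, count_barEdge] at hdeg
        by_contra hcon
        rw [if_neg hcon] at hdeg
        omega
      have := good_bar_vertex hβg hβne him
      have hmono := degM_mono (β := β) (γ := σ) (fun f => le_maxGoodSub hβg hβle f) i
      omega
    · obtain ⟨f, hfpos, hif⟩ := degM_edgesOf_pos_iff.mp hpos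
      obtain ⟨β, hβle, hβg, hβpos⟩ := exists_good_of_pos hfpos
      have hβne : β ≠ 0 := ne_zero_iff_exists_pos.mpr ⟨f, hβpos⟩
      rcases hβg with h0 | ⟨_, hdegβ⟩
      · exact absurd h0 hβne
      have h1 : 0 < degM (edgesOf β) i := degM_edgesOf_pos hβpos hif
      have h2 : 0 < degM (barGraph m β) i := by rw [degM_bar]; omega
      have h3 := hdegβ i h2
      have hmono := degM_mono (β := β) (γ := σ)
        (fun g => le_maxGoodSub (Or.inr ⟨‹MHConnected (barGraph m β)›, hdegβ⟩) hβle g) i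
      rw [degM_bar] at h3 ⊢
      omega

lemma mem_barEdge {n m : ℕ} {i : Fin n} : i ∈ barEdge n m ↔ (i : ℕ) < m := by
  rw [barEdge, ← Finset.mem_def]
  simp


/-- Lemma 6.4 (peeling lemma for good multi-hypergraphs): if α is a nonzero good
multi-hypergraph, e is an edge of α, and α⋆(e), the maximal good subgraph of
α − 1_e, is nonzero, then
r|α⋆(e)| − 2|V(α⋆(e))| + m ≤ r|α| − 2|V(α)| + m − 1. -/
theorem peeling_lemma (n r m : ℕ) (hr : 2 ≤ r) (hm : 2 ≤ m) (hmn : m ≤ n)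
    (α : MHG n r) (hgood : GoodMHG m α) (hne : α ≠ 0)
    (e : Sym (Fin n) r) (he : 0 < α e)
    (hstar : maxGoodSub m (Function.update α e (α e - 1)) ≠ 0) :
    (r * edgeCount (maxGoodSub m (Function.update α e (α e - 1))) : ℤ) -
        2 * (vertexCount (maxGoodSub m (Function.update α e (α e - 1))) : ℤ) + m ≤
      (r * edgeCount α : ℤ) - 2 * (vertexCount α : ℤ) + m - 1 := by
  classical
  set γ : MHG n r := Function.update α e (α e - 1) with hγdef
  set σ : MHG n r := maxGoodSub m γ with hσdef
  have hσgood : GoodMHG m σ := maxGoodSub_good (by omega) hmn γ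
  have hγα : ∀ f, γ f ≤ α f := by
    intro f
    rcases eq_or_ne f e with hfe | hfe
    · subst hfe; rw [hγdef, Function.update_self]; omega
    · rw [hγdef, Function.update_of_ne hfe]
  have hσα : ∀ f, σ f ≤ α f := fun f => le_trans (maxGoodSub_le γ f) (hγα f)
  have hσe : σ e < α e := by
    have h1 : σ e ≤ γ e := maxGoodSub_le γ e
    have h2 : γ e = α e - 1 := by rw [hγdef, Function.update_self]
    omega
  set D : Fin n → ℕ := degM (edgesOf α) with hDdef
  set Ds : Fin n → ℕ := degM (edgesOf σ) with hDsdef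
  have hDmono : ∀ i, Ds i ≤ D i := degM_mono hσα
  have hbarfact : ∀ i : Fin n, (i : ℕ) < m → 0 < Ds i :=
    fun i him => good_bar_vertex hσgood hstar him
  rcases hgood with h0 | ⟨hconnα, hdegα⟩
  · exact absurd h0 hne
  -- lost vertices
  set A : Finset (Fin n) := Finset.univ.filter fun i => 0 < D i with hAdef
  set B : Finset (Fin n) := Finset.univ.filter fun i => 0 < Ds i with hBdef
  have hBA : B ⊆ A := by
    intro i hi
    rw [hBdef, Finset.mem_filter] at hi
    rw [hAdef, Finset.mem_filter]
    exact ⟨hi.1, lt_of_lt_of_le hi.2 (hDmono i)⟩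
  set T : Finset (Fin n) := A \ B with hTdef
  have hTmem : ∀ i ∈ T, 0 < D i ∧ Ds i = 0 := by
    intro i hi
    rw [hTdef, Finset.mem_sdiff, hAdef, hBdef, Finset.mem_filter, Finset.mem_filter] at hi
    refine ⟨hi.1.2, ?_⟩
    have := hi.2
    simp only [Finset.mem_univ, true_and] at this
    omega
  have hT2 : ∀ i ∈ T, 2 ≤ D i := by
    intro i hi
    obtain ⟨hDi, hDsi⟩ := hTmem i hi
    have him : ¬ (i : ℕ) < m := fun h => by have := hbarfact i h; omega
    have hc : (barEdge n m).count i = 0 := by rw [count_barEdge, if_neg him]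
    have h1 : 0 < degM (barGraph m α) i := by rw [degM_bar, hc, ← hDdef]; omega
    have h2 := hdegα i h1
    rw [degM_bar, hc, ← hDdef] at h2
    omega
  -- the key inequality
  have key : 2 * (T.card : ℤ) + 1 ≤ ∑ i : Fin n, ((D i : ℤ) - (Ds i : ℤ)) := by
    have hnonneg : ∀ i ∈ Finset.univ, (0:ℤ) ≤ (D i : ℤ) - (Ds i : ℤ) := by
      intro i _
      have := hDmono i
      omega
    by_cases hcase : ∃ f : Sym (Fin n) r, σ f < α f ∧ ∃ w : Fin n,
        w ∈ (f : Multiset (Fin n)) ∧ 0 < Ds w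
    · obtain ⟨f, hfd, w, hwf, hwpos⟩ := hcase
      have hwT : w ∉ T := by
        intro hw
        have := (hTmem w hw).2
        omega
      have hw1 : (1:ℤ) ≤ (D w : ℤ) - (Ds w : ℤ) := by
        have hsubd : (D w : ℤ) - (Ds w : ℤ) =
            ∑ g : Sym (Fin n) r, ((α g : ℤ) - (σ g : ℤ)) * (Multiset.count w (g : Multiset (Fin n)) : ℤ) := by
          rw [hDdef, hDsdef, degM_edgesOf, degM_edgesOf]
          push_cast
          rw [← Finset.sum_sub_distrib]
          congr 1; funext g; ring
        rw [hsubd]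
        have hterm : (1:ℤ) ≤ ((α f : ℤ) - (σ f : ℤ)) * (Multiset.count w (f : Multiset (Fin n)) : ℤ) := by
          have h1 : (1:ℤ) ≤ (α f : ℤ) - (σ f : ℤ) := by omega
          have h2 : (1:ℤ) ≤ (Multiset.count w (f : Multiset (Fin n)) : ℤ) := by
            have := Multiset.count_pos.mpr hwf
            omega
          nlinarith
        refine le_trans hterm (Finset.single_le_sum (f := fun g : Sym (Fin n) r =>
          ((α g : ℤ) - (σ g : ℤ)) * (Multiset.count w (g : Multiset (Fin n)) : ℤ)) ?_ (Finset.mem_univ f))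
        intro g _
        have h1 : (0:ℤ) ≤ (α g : ℤ) - (σ g : ℤ) := by have := hσα g; omega
        positivity
      calc 2 * (T.card : ℤ) + 1 ≤ (∑ i ∈ T, ((D i : ℤ) - (Ds i : ℤ))) + ((D w : ℤ) - (Ds w : ℤ)) := by
            have hsT : 2 * (T.card : ℤ) ≤ ∑ i ∈ T, ((D i : ℤ) - (Ds i : ℤ)) := by
              rw [show 2 * (T.card : ℤ) = ∑ _i ∈ T, (2:ℤ) by rw [Finset.sum_const]; ring]
              refine Finset.sum_le_sum ?_
              intro i hi
              have h2 := hT2 i hi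
              have h0 := (hTmem i hi).2
              omega
            linarith
        _ = ∑ i ∈ insert w T, ((D i : ℤ) - (Ds i : ℤ)) := by rw [Finset.sum_insert hwT]; ring
        _ ≤ ∑ i : Fin n, ((D i : ℤ) - (Ds i : ℤ)) := by
            refine Finset.sum_le_sum_of_subset_of_nonneg (Finset.subset_univ _) ?_
            intro i _ _
            exact hnonneg i (Finset.mem_univ i)
    · push_neg at hcase
      exfalso
      -- all removed edges consist of σ-isolated vertices; contradiction with connectivity
      have hzero : ∀ f : Sym (Fin n) r, σ f < α f → ∀ w ∈ (f : Multiset (Fin n)), Ds w = 0 := by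
        intro f hf w hw
        have := hcase f hf w hw
        omega
      obtain ⟨w0, hw0⟩ := Multiset.card_pos_iff_exists_mem.mp
        (show 0 < Multiset.card (e : Multiset (Fin n)) by rw [show Multiset.card (e : Multiset (Fin n)) = r from e.2]; omega)
      obtain ⟨f0, hf0⟩ := ne_zero_iff_exists_pos.mp hstar
      obtain ⟨v0, hv0⟩ := Multiset.card_pos_iff_exists_mem.mp
        (show 0 < Multiset.card (f0 : Multiset (Fin n)) by rw [show Multiset.card (f0 : Multiset (Fin n)) = r from f0.2]; omega)
      have hDsv0 : 0 < Ds v0 := degM_edgesOf_pos hf0 hv0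
      have hDsw0 : Ds w0 = 0 := hzero e hσe w0 hw0
      have hαf0 : 0 < α f0 := lt_of_lt_of_le hf0 (hσα f0)
      have hme : (e : Multiset (Fin n)) ∈ barGraph m α := mem_barGraph.mpr (Or.inr ⟨e, he, rfl⟩)
      have hmf0 : (f0 : Multiset (Fin n)) ∈ barGraph m α := mem_barGraph.mpr (Or.inr ⟨f0, hαf0, rfl⟩)
      obtain ⟨p, c, hmemc, hu0, hvlast, hadj⟩ := hconnα w0 v0 ⟨_, hme, hw0⟩ ⟨_, hmf0, hv0⟩
      have hrtg : Relation.ReflTransGen (MLink (barGraph m α)) w0 v0 :=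
        rtg_of_chain p c hmemc hu0 hvlast hadj
      have hprop : ∀ v : Fin n, Relation.ReflTransGen (MLink (barGraph m α)) w0 v → Ds v = 0 := by
        intro v hv
        induction hv with
        | refl => exact hDsw0
        | tail _ hlink ih =>
          rename_i b v' _
          obtain ⟨E, hE, hbE, hvE⟩ := hlink
          rw [mem_barGraph] at hE
          rcases hE with hEbar | ⟨g, hg1, hg2⟩
          · exfalso
            have : (b : ℕ) < m := mem_barEdge.mp (hEbar ▸ hbE)
            have := hbarfact b this
            omega
          · rcases Nat.eq_zero_or_pos (σ g) with hσg | hσg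
            · exact hzero g (by omega) v' (hg2 ▸ hvE)
            · exfalso
              have : 0 < Ds b := degM_edgesOf_pos hσg (hg2 ▸ hbE)
              omega
      have := hprop v0 hrtg
      omega
  -- conclude
  have hsumα : (∑ i : Fin n, (D i : ℤ)) = (r : ℤ) * (edgeCount α : ℤ) := by
    rw [hDdef]
    rw [show (∑ i : Fin n, ((degM (edgesOf α) i : ℕ) : ℤ)) = ((∑ i : Fin n, degM (edgesOf α) i : ℕ) : ℤ) by push_cast; ring]
    rw [sum_degM]
    rw [edgeCount]
    push_cast
    ring
  have hsumσ : (∑ i : Fin n, (Ds i : ℤ)) = (r : ℤ) * (edgeCount σ : ℤ) := by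
    rw [hDsdef]
    rw [show (∑ i : Fin n, ((degM (edgesOf σ) i : ℕ) : ℤ)) = ((∑ i : Fin n, degM (edgesOf σ) i : ℕ) : ℤ) by push_cast; ring]
    rw [sum_degM]
    rw [edgeCount]
    push_cast
    ring
  have hsplit : (∑ i : Fin n, ((D i : ℤ) - (Ds i : ℤ))) =
      (∑ i : Fin n, (D i : ℤ)) - (∑ i : Fin n, (Ds i : ℤ)) := Finset.sum_sub_distrib _ _
  have hvA : vertexCount α = A.card := by rw [vertexCount, hAdef, hDdef]
  have hvB : vertexCount σ = B.card := by rw [vertexCount, hBdef, hDsdef]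
  have hcards : (T.card : ℤ) = (vertexCount α : ℤ) - (vertexCount σ : ℤ) := by
    have hle : B.card ≤ A.card := Finset.card_le_card hBA
    rw [hvA, hvB, hTdef, Finset.card_sdiff_of_subset hBA]
    omega
  push_cast
  rw [hsplit, hsumα, hsumσ] at key
  push_cast at hcards key
  linarith
end

section
/- Counting good multi-hypergraphs (Lemma 6.5): Fix integers r ≥ 2 and m ≥ 2. There exists a constant C = C(r,m) > 0 such that for all integers k, ℓ ≥ 1 with m ≤ k ≤ rℓ, the number of good r-uniform multi-hypergraphs α on [n] with |V(α)| = k and |α| = ℓ is at most (C·n/k)^{k−m} · (C·k^{r−1})^ℓ. -/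
open MeasureTheory

section CountingAux

variable {n r m : ℕ}

/-- The finset of non-isolated vertices of `α`. -/
def vFin {n r : ℕ} (α : MHG n r) : Finset (Fin n) :=
  Finset.univ.filter fun i : Fin n => 0 < degM (edgesOf α) i

lemma vertexCount_eq_card_vFin (α : MHG n r) : vertexCount α = (vFin α).card := rfl

/-- The finset version of the bar edge. -/
def barFin (n m : ℕ) : Finset (Fin n) :=
  Finset.univ.filter fun i : Fin n => (i : ℕ) < m

lemma barEdge_eq_val : barEdge n m = (barFin n m).val := rfl

lemma count_edgesOf (α : MHG n r) (s : Sym (Fin n) r) :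
    Multiset.count (↑s) (edgesOf α) = α s := by
  classical
  rw [edgesOf, Multiset.count_sum']
  rw [Finset.sum_eq_single s]
  · simp [Multiset.count_replicate]
  · intro e _ hne
    simp only [Multiset.count_replicate]
    rw [if_neg]
    intro h
    exact hne (Sym.coe_injective h)
  · simp

lemma edgesOf_injective : Function.Injective (edgesOf : MHG n r → Multiset (Multiset (Fin n))) := by
  intro a b h
  funext s
  rw [← count_edgesOf a s, h, count_edgesOf]

lemma card_finset_sum {β γ : Type*} (s : Finset β) (f : β → Multiset γ) :
    Multiset.card (∑ b ∈ s, f b) = ∑ b ∈ s, Multiset.card (f b) := by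
  classical
  induction s using Finset.induction_on with
  | empty => simp
  | insert _ _ h ih => rw [Finset.sum_insert h, Finset.sum_insert h, Multiset.card_add, ih]

lemma card_edgesOf (α : MHG n r) : Multiset.card (edgesOf α) = edgeCount α := by
  rw [edgesOf, card_finset_sum, edgeCount]
  simp

lemma exists_of_mem_edgesOf {α : MHG n r} {e : Multiset (Fin n)} (he : e ∈ edgesOf α) :
    ∃ s : Sym (Fin n) r, e = ↑s := by
  rw [edgesOf, Multiset.mem_sum] at he
  obtain ⟨s, -, hs⟩ := he
  exact ⟨s, Multiset.eq_of_mem_replicate hs⟩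

lemma card_of_mem_edgesOf {α : MHG n r} {e : Multiset (Fin n)} (he : e ∈ edgesOf α) :
    Multiset.card e = r := by
  obtain ⟨s, rfl⟩ := exists_of_mem_edgesOf he
  exact s.2

lemma mem_vFin_of_mem_edge {α : MHG n r} {e : Multiset (Fin n)} (he : e ∈ edgesOf α)
    {v : Fin n} (hv : v ∈ e) : v ∈ vFin α := by
  simp only [vFin, Finset.mem_filter, Finset.mem_univ, true_and]
  have h1 : Multiset.count v e ∈ (edgesOf α).map (fun e => Multiset.count v e) :=
    Multiset.mem_map_of_mem _ he
  have h2 : Multiset.count v e ≤ degM (edgesOf α) v :=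
    Multiset.single_le_sum (fun x _ => Nat.zero_le x) _ h1
  have h3 : 0 < Multiset.count v e := Multiset.count_pos.mpr hv
  omega

lemma card_barFin (hmn : m ≤ n) : (barFin n m).card = m := by
  classical
  have himg : barFin n m = Finset.image (Fin.castLE hmn) Finset.univ := by
    ext x
    simp only [barFin, Finset.mem_filter, Finset.mem_univ, true_and, Finset.mem_image]
    constructor
    · intro hx; exact ⟨⟨(x : ℕ), hx⟩, Fin.ext rfl⟩
    · rintro ⟨i, rfl⟩; simpa using i.2
  rw [himg, Finset.card_image_of_injective _ (Fin.castLE_injective hmn), Finset.card_univ,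
    Fintype.card_fin]

lemma degM_cons (e : Multiset (Fin n)) (G : Multiset (Multiset (Fin n))) (i : Fin n) :
    degM (e ::ₘ G) i = Multiset.count i e + degM G i := by
  simp [degM]

lemma count_barEdge_s17 {i : Fin n} (him : (i : ℕ) < m) : Multiset.count i (barEdge n m) = 1 := by
  classical
  apply Multiset.count_eq_one_of_mem (barFin n m).nodup
  rw [Finset.mem_val]
  simp [barFin, him]

lemma degα_pos_of_lt_m {α : MHG n r} (hg : GoodMHG m α) (h0 : α ≠ 0)
    {i : Fin n} (him : (i : ℕ) < m) : 0 < degM (edgesOf α) i := by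
  rcases hg with h | ⟨-, hdeg⟩
  · exact absurd h h0
  have hc : Multiset.count i (barEdge n m) = 1 := count_barEdge_s17 him
  have hpos : 0 < degM (barGraph m α) i := by
    rw [barGraph, degM_cons, hc]; omega
  have h2 := hdeg i hpos
  rw [barGraph, degM_cons, hc] at h2
  omega

lemma bar_subset_vFin {α : MHG n r} (hg : GoodMHG m α) (h0 : α ≠ 0) :
    barFin n m ⊆ vFin α := by
  intro i hi
  have him : (i : ℕ) < m := by simpa [barFin] using hi
  simp only [vFin, Finset.mem_filter, Finset.mem_univ, true_and]
  exact degα_pos_of_lt_m hg h0 him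

lemma edgesOf_zero : edgesOf (0 : MHG n r) = 0 := by simp [edgesOf]

lemma vertexCount_zero : vertexCount (0 : MHG n r) = 0 := by
  simp [vertexCount, edgesOf_zero, degM]

/-- Encode the edge multiset of `α` as an element of `Sym (Sym (Fin k) r) l`. -/
noncomputable def encEdges (α : MHG n r) (k l : ℕ) (hV : (vFin α).card = k)
    (hl : edgeCount α = l) : Sym (Sym (Fin k) r) l :=
  Sym.mk ((edgesOf α).pmap
      (fun e he =>
        Sym.mk (e.pmap (fun v hv => Finset.equivFinOfCardEq hV ⟨v, hv⟩)
            (fun v hv => mem_vFin_of_mem_edge he hv))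
          (by rw [Multiset.card_pmap]; exact card_of_mem_edgesOf he))
      (fun e he => he))
    (by rw [Multiset.card_pmap, card_edgesOf, hl])

/-- Decode a multiset of `Sym (Fin k) r` back to a multiset of edges on `Fin n`. -/
noncomputable def decEdges (k l : ℕ) (V : Finset (Fin n)) (hV : V.card = k)
    (c : Sym (Sym (Fin k) r) l) : Multiset (Multiset (Fin n)) :=
  (Sym.toMultiset c).map fun s => (Sym.toMultiset s).map
    (fun x => ((Finset.equivFinOfCardEq hV).symm x : Fin n))

lemma decEdges_encEdges (α : MHG n r) (k l : ℕ) (hV : (vFin α).card = k)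
    (hl : edgeCount α = l) :
    decEdges k l (vFin α) hV (encEdges α k l hV hl) = edgesOf α := by
  rw [decEdges, encEdges, Sym.coe_mk, Multiset.map_pmap]
  refine (Multiset.pmap_congr (edgesOf α) (fun e he h1 h2 => ?_)).trans
    ((Multiset.pmap_eq_map _ id (edgesOf α) (fun e he => he)).trans (Multiset.map_id _))
  rw [Sym.coe_mk, Multiset.map_pmap]
  refine (Multiset.pmap_congr e (fun v hv hv1 hv2 => ?_)).trans
    ((Multiset.pmap_eq_map _ id e (fun v hv => hv)).trans (Multiset.map_id _))
  simp

lemma card_bound (r m n k l : ℕ) (hmn : m ≤ n) (hk : 1 ≤ k) :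
    Nat.card {α : MHG n r // GoodMHG m α ∧ vertexCount α = k ∧ edgeCount α = l} ≤
      n.choose (k - m) * (((k + r - 1).choose r) + l - 1).choose l := by
  classical
  set Sub := {α : MHG n r // GoodMHG m α ∧ vertexCount α = k ∧ edgeCount α = l} with hSub
  have hV : ∀ a : Sub, (vFin a.1).card = k := fun a => by
    rw [← vertexCount_eq_card_vFin]; exact a.2.2.1
  have h0 : ∀ a : Sub, a.1 ≠ 0 := fun a ha => by
    have h := a.2.2.1
    rw [ha, vertexCount_zero] at h
    omega
  have hbar : ∀ a : Sub, barFin n m ⊆ vFin a.1 := fun a =>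
    bar_subset_vFin a.2.1 (h0 a)
  have hS : ∀ a : Sub, (vFin a.1 \ barFin n m).card = k - m := fun a => by
    rw [Finset.card_sdiff_of_subset (hbar a), hV a, card_barFin hmn]
  let f : Sub → {S : Finset (Fin n) // S.card = k - m} × Sym (Sym (Fin k) r) l :=
    fun a => (⟨vFin a.1 \ barFin n m, hS a⟩, encEdges a.1 k l (hV a) a.2.2.2)
  have hinj : Function.Injective f := by
    intro a b hab
    have h1 : vFin a.1 \ barFin n m = vFin b.1 \ barFin n m :=
      congrArg Subtype.val (congrArg Prod.fst hab)
    have hVeq : vFin a.1 = vFin b.1 := by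
      rw [← Finset.sdiff_union_of_subset (hbar a), ← Finset.sdiff_union_of_subset (hbar b), h1]
    have h2 : encEdges a.1 k l (hV a) a.2.2.2 = encEdges b.1 k l (hV b) b.2.2.2 :=
      congrArg Prod.snd hab
    have hgen : ∀ (V W : Finset (Fin n)) (hVc : V.card = k) (hWc : W.card = k)
        (c : Sym (Sym (Fin k) r) l), V = W → decEdges k l V hVc c = decEdges k l W hWc c := by
      rintro V W hVc hWc c rfl; rfl
    have hE : edgesOf a.1 = edgesOf b.1 := by
      rw [← decEdges_encEdges a.1 k l (hV a) a.2.2.2,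
        ← decEdges_encEdges b.1 k l (hV b) b.2.2.2, h2,
        hgen _ _ (hV a) (hV b) _ hVeq]
    exact Subtype.ext (edgesOf_injective hE)
  have hle := Nat.card_le_card_of_injective f hinj
  have hsym : Fintype.card (Sym (Sym (Fin k) r) l)
      = (((k + r - 1).choose r) + l - 1).choose l := by
    rw [Sym.card_sym_eq_choose, Sym.card_sym_eq_choose, Fintype.card_fin]
  calc Nat.card Sub
      ≤ Nat.card ({S : Finset (Fin n) // S.card = k - m} × Sym (Sym (Fin k) r) l) := hle
    _ = Fintype.card ({S : Finset (Fin n) // S.card = k - m} × Sym (Sym (Fin k) r) l) :=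
        Nat.card_eq_fintype_card
    _ = n.choose (k - m) * (((k + r - 1).choose r) + l - 1).choose l := by
        rw [Fintype.card_prod, Fintype.card_finset_len, Fintype.card_fin, hsym]

end CountingAux

section NumAux

lemma pow_self_le_three_pow_mul_factorial (b : ℕ) :
    (b : ℝ) ^ b ≤ 3 ^ b * (Nat.factorial b : ℝ) := by
  have h := Real.pow_div_factorial_le_exp (x := (b : ℝ)) (Nat.cast_nonneg b) b
  have he : Real.exp (b : ℝ) = Real.exp 1 ^ b := by
    rw [← Real.exp_nat_mul]; norm_num
  have h3 : Real.exp 1 ^ b ≤ 3 ^ b :=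
    pow_le_pow_left₀ (Real.exp_pos 1).le (Real.exp_one_lt_d9.trans (by norm_num)).le b
  have hfac : (0 : ℝ) < (Nat.factorial b : ℝ) := by
    exact_mod_cast Nat.factorial_pos b
  rw [div_le_iff₀ hfac] at h
  calc (b : ℝ) ^ b ≤ Real.exp (b : ℝ) * (Nat.factorial b : ℝ) := h
    _ = Real.exp 1 ^ b * (Nat.factorial b : ℝ) := by rw [he]
    _ ≤ 3 ^ b * (Nat.factorial b : ℝ) := by
        exact mul_le_mul_of_nonneg_right h3 hfac.le

lemma choose_le_real (a b : ℕ) (hb : 0 < b) :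
    ((a.choose b : ℕ) : ℝ) ≤ (3 * (a : ℝ) / (b : ℝ)) ^ b := by
  have h1 : ((a.choose b : ℕ) : ℝ) ≤ (a : ℝ) ^ b / (Nat.factorial b : ℝ) := by
    have := Nat.choose_le_pow_div (α := ℝ) b a
    push_cast at this ⊢
    convert this using 2
  have h2 : (3 * (a : ℝ) / (b : ℝ)) ^ b = 3 ^ b * (a : ℝ) ^ b / (b : ℝ) ^ b := by
    rw [div_pow, mul_pow]
  rw [h2]
  have hbR : (0 : ℝ) < (b : ℝ) ^ b := by positivity
  have hfac : (0 : ℝ) < (Nat.factorial b : ℝ) := by exact_mod_cast Nat.factorial_pos b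
  refine h1.trans ?_
  rw [div_le_div_iff₀ hfac hbR]
  calc (a : ℝ) ^ b * (b : ℝ) ^ b
      ≤ (a : ℝ) ^ b * (3 ^ b * (Nat.factorial b : ℝ)) := by
        exact mul_le_mul_of_nonneg_left (pow_self_le_three_pow_mul_factorial b) (by positivity)
    _ = 3 ^ b * (a : ℝ) ^ b * (Nat.factorial b : ℝ) := by ring

end NumAux

/-- Lemma 6.5: counting good multi-hypergraphs.  There is a constant C = C(r,m) such
that for all k, ℓ ≥ 1 with m ≤ k ≤ rℓ, the number of good r-uniform multi-hypergraphs
on [n] with k non-isolated vertices and ℓ edges is at most (Cn/k)^{k−m}·(Ck^{r−1})^ℓ. -/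
theorem counting_good_multihypergraphs (r m : ℕ) (hr : 2 ≤ r) (hm : 2 ≤ m) :
    ∃ C : ℝ, 0 < C ∧ ∀ n k l : ℕ, m ≤ n → 1 ≤ k → 1 ≤ l → m ≤ k → k ≤ r * l →
      (Nat.card {α : MHG n r // GoodMHG m α ∧ vertexCount α = k ∧ edgeCount α = l} : ℝ) ≤
        (C * n / k) ^ (k - m) * (C * (k : ℝ) ^ (r - 1)) ^ l := by
  classical
  refine ⟨3 * (m + 1) + 3 ^ (r + 2) * r, by positivity, ?_⟩
  intro n k l hmn hk hl hmk hkrl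
  set C : ℝ := 3 * (m + 1) + 3 ^ (r + 2) * r with hC
  have hkR : (0 : ℝ) < k := by exact_mod_cast hk
  have hlR : (0 : ℝ) < l := by exact_mod_cast hl
  have hrR : (0 : ℝ) < r := by exact_mod_cast (by omega : 0 < r)
  set N := (k + r - 1).choose r with hN
  -- Bound A : vertex-set choices
  have hA : ((n.choose (k - m) : ℕ) : ℝ) ≤ (C * n / k) ^ (k - m) := by
    rcases Nat.eq_or_lt_of_le hmk with he | hlt
    · have h0 : k - m = 0 := by omega
      rw [h0]
      simp
    · have hj : 0 < k - m := by omega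
      have hjR : (0 : ℝ) < ((k - m : ℕ) : ℝ) := by exact_mod_cast hj
      refine (choose_le_real n (k - m) hj).trans ?_
      refine pow_le_pow_left₀ (by positivity) ?_ (k - m)
      rw [div_le_div_iff₀ hjR hkR]
      have hnk : (k : ℝ) ≤ (m + 1) * ((k - m : ℕ) : ℝ) := by
        have h1 : 1 ≤ k - m := hj
        have h2 : m * 1 ≤ m * (k - m) := Nat.mul_le_mul_left m h1
        have h3 : k ≤ (m + 1) * (k - m) := by
          calc k = m + (k - m) := by omega
            _ ≤ m * (k - m) + (k - m) := by omega
            _ = (m + 1) * (k - m) := by ring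
        exact_mod_cast h3
      have hCm : 3 * ((m : ℝ) + 1) ≤ C := by
        have : (0 : ℝ) ≤ 3 ^ (r + 2) * r := by positivity
        rw [hC]; linarith
      have hnn : (0 : ℝ) ≤ (n : ℝ) := Nat.cast_nonneg n
      calc 3 * (n : ℝ) * k ≤ 3 * (n : ℝ) * ((m + 1) * ((k - m : ℕ) : ℝ)) := by
            exact mul_le_mul_of_nonneg_left hnk (by positivity)
        _ = (3 * ((m : ℝ) + 1)) * n * ((k - m : ℕ) : ℝ) := by ring
        _ ≤ C * n * ((k - m : ℕ) : ℝ) := by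
            have := mul_le_mul_of_nonneg_right
              (mul_le_mul_of_nonneg_right hCm hnn) hjR.le
            linarith [this]
  -- Bound B : edge multiset choices
  have hkpow1 : (1 : ℝ) ≤ (k : ℝ) ^ (r - 1) := by
    apply one_le_pow₀
    exact_mod_cast hk
  have hB : (((N + l - 1).choose l : ℕ) : ℝ) ≤ (C * (k : ℝ) ^ (r - 1)) ^ l := by
    have hNle : (N : ℝ) ≤ 3 ^ r * (k : ℝ) ^ r := by
      have h1 := choose_le_real (k + r - 1) r (by omega)
      rw [hN]
      refine h1.trans ?_
      have h2 : (3 : ℝ) ^ r * (k : ℝ) ^ r = (3 * (k : ℝ)) ^ r := by rw [mul_pow]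
      rw [h2]
      refine pow_le_pow_left₀ (by positivity) ?_ r
      rw [div_le_iff₀ hrR]
      have hc : ((k + r - 1 : ℕ) : ℝ) = (k : ℝ) + r - 1 := by
        rw [Nat.cast_sub (by omega : 1 ≤ k + r)]
        push_cast
        ring
      have hk1 : (1 : ℝ) ≤ (k : ℝ) := by exact_mod_cast hk
      have hr2 : (2 : ℝ) ≤ (r : ℝ) := by exact_mod_cast hr
      nlinarith [hc, hk1, hr2]
    have hkr1 : (k : ℝ) ^ r = (k : ℝ) ^ (r - 1) * k := by
      rw [← pow_succ]
      congr 1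
      omega
    have hklr : (k : ℝ) ≤ (r : ℝ) * l := by exact_mod_cast hkrl
    have hNle2 : (N : ℝ) ≤ 3 ^ r * (k : ℝ) ^ (r - 1) * ((r : ℝ) * l) := by
      calc (N : ℝ) ≤ 3 ^ r * (k : ℝ) ^ r := hNle
        _ = 3 ^ r * (k : ℝ) ^ (r - 1) * k := by rw [hkr1]; ring
        _ ≤ 3 ^ r * (k : ℝ) ^ (r - 1) * ((r : ℝ) * l) := by
            exact mul_le_mul_of_nonneg_left hklr (by positivity)
    refine (choose_le_real (N + l - 1) l hl).trans ?_
    refine pow_le_pow_left₀ (by positivity) ?_ l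
    rw [div_le_iff₀ hlR]
    have hcst : ((N + l - 1 : ℕ) : ℝ) ≤ (N : ℝ) + l := by
      have h5 : (N + l - 1 : ℕ) ≤ N + l := by omega
      calc ((N + l - 1 : ℕ) : ℝ) ≤ ((N + l : ℕ) : ℝ) := by exact_mod_cast h5
        _ = (N : ℝ) + l := by push_cast; ring
    have hKl : (l : ℝ) ≤ (k : ℝ) ^ (r - 1) * l := le_mul_of_one_le_left hlR.le hkpow1
    have h9 : (3 : ℝ) * 3 ^ r * r ≤ 3 ^ (r + 2) * r := by
      have h6 : (3 : ℝ) ^ (r + 2) = 9 * 3 ^ r := by ring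
      have h7 : (0 : ℝ) ≤ 3 ^ r * r := by positivity
      rw [h6]; nlinarith
    have hm1 : (1 : ℝ) ≤ (m : ℝ) + 1 := by
      have : (0 : ℝ) ≤ (m : ℝ) := Nat.cast_nonneg m
      linarith
    calc 3 * ((N + l - 1 : ℕ) : ℝ) ≤ 3 * ((N : ℝ) + l) := by linarith
      _ ≤ 3 * (3 ^ r * (k : ℝ) ^ (r - 1) * ((r : ℝ) * l) + l) := by linarith
      _ = (3 * 3 ^ r * r) * ((k : ℝ) ^ (r - 1) * l) + 3 * l := by ring
      _ ≤ (3 ^ (r + 2) * r) * ((k : ℝ) ^ (r - 1) * l) + 3 * ((m : ℝ) + 1) * ((k : ℝ) ^ (r - 1) * l) := by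
          have hKlnn : (0 : ℝ) ≤ (k : ℝ) ^ (r - 1) * l := by positivity
          have hx1 := mul_le_mul_of_nonneg_right h9 hKlnn
          have hx2 : 3 * (l : ℝ) ≤ 3 * ((m : ℝ) + 1) * ((k : ℝ) ^ (r - 1) * l) := by
            nlinarith [hKl, hlR.le]
          linarith
      _ = C * (k : ℝ) ^ (r - 1) * l := by rw [hC]; ring
  -- combine
  have hcb := card_bound r m n k l hmn hk
  have hcast : ((n.choose (k - m) * ((N + l - 1).choose l) : ℕ) : ℝ)
      = ((n.choose (k - m) : ℕ) : ℝ) * (((N + l - 1).choose l : ℕ) : ℝ) := by push_cast; ring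
  calc ((Nat.card {α : MHG n r // GoodMHG m α ∧ vertexCount α = k ∧ edgeCount α = l} : ℕ) : ℝ)
      ≤ ((n.choose (k - m) * ((N + l - 1).choose l) : ℕ) : ℝ) := by exact_mod_cast hcb
    _ = ((n.choose (k - m) : ℕ) : ℝ) * (((N + l - 1).choose l : ℕ) : ℝ) := hcast
    _ ≤ (C * n / k) ^ (k - m) * (C * (k : ℝ) ^ (r - 1)) ^ l :=
        mul_le_mul hA hB (Nat.cast_nonneg _) (by positivity)
end
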